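/- arXiv:2605.21946 — 5 statements merged into one kernel-verified Lean document; each statement's English description precedes it below -/
import Mathlib

section
/- Wick formula for PSD permanents: let V ∈ ℂ^{n×d} with rows v₁,…,vₙ and let A = V V†. Then per(A) = π^{−d} ∫_{ℂ^d} ∏_{i=1}^n |vᵢ† z|² e^{−z†z} dz, where the integral is with respect to Lebesgue measure on ℂ^d ≅ ℝ^{2d}. -/
open MeasureTheory Matrix Complex Finset

set_option maxHeartbeats 1000000
set_option linter.unusedSectionVars false
section WickAux



lemma gauss_half_int : Integrable (fun z : ℂ => Real.exp (-(1/2) * Complex.normSq z)) := by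
  have h2 : Integrable (fun p : ℝ × ℝ =>
      Real.exp (-(1/2) * p.1 ^ 2) * Real.exp (-(1/2) * p.2 ^ 2)) := by
    rw [show (volume : Measure (ℝ × ℝ)) = (volume : Measure ℝ).prod volume from rfl]
    exact (integrable_exp_neg_mul_sq (by norm_num : (0:ℝ) < 1/2)).mul_prod
      (integrable_exp_neg_mul_sq (by norm_num : (0:ℝ) < 1/2))
  have := (Complex.volume_preserving_equiv_real_prod.integrable_comp_emb
    Complex.measurableEquivRealProd.measurableEmbedding).2 h2
  refine this.congr ?_
  filter_upwards with z
  show Real.exp (-(1/2) * z.re ^ 2) * Real.exp (-(1/2) * z.im ^ 2)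
      = Real.exp (-(1/2) * Complex.normSq z)
  rw [← Real.exp_add, Complex.normSq_apply]
  ring_nf




lemma pow_mul_exp_bound (k : ℕ) {r : ℝ} (hr : 0 ≤ r) :
    r ^ k * Real.exp (-(r^2)) ≤ (1 + 2^k * k.factorial) * Real.exp (-(1/2) * r^2) := by
  have h1 : r ^ k ≤ 1 + (r^2)^k := by
    rcases le_total r 1 with h | h
    · have h0 : r ^ k ≤ 1 := pow_le_one₀ hr h
      nlinarith [pow_nonneg (pow_nonneg hr 2) k]
    · have h2 : r ^ k ≤ (r^2) ^ k := by
        apply pow_le_pow_left₀ hr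
        nlinarith
      nlinarith [pow_nonneg (pow_nonneg hr 2) k]
  have h2 : (r^2)^k ≤ 2^k * k.factorial * Real.exp ((1/2) * r^2) := by
    have hx : (0:ℝ) ≤ (1/2) * r^2 := by positivity
    have hsum := Real.sum_le_exp_of_nonneg hx (k+1)
    have hterm : ((1/2) * r^2) ^ k / k.factorial ≤ Real.exp ((1/2) * r^2) := by
      refine le_trans ?_ hsum
      exact Finset.single_le_sum (f := fun i => ((1/2) * r^2)^i / i.factorial)
        (fun i _ => by positivity) (Finset.self_mem_range_succ k)
    have hfac : (0:ℝ) < k.factorial := by exact_mod_cast k.factorial_pos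
    rw [div_le_iff₀ hfac] at hterm
    calc (r^2)^k = 2^k * ((1/2) * r^2)^k := by
          rw [mul_pow, ← mul_assoc, ← mul_pow]; norm_num
      _ ≤ 2^k * (Real.exp ((1/2) * r^2) * k.factorial) := by
          apply mul_le_mul_of_nonneg_left hterm (by positivity)
      _ = 2^k * k.factorial * Real.exp ((1/2) * r^2) := by ring
  have hsplit : Real.exp (-(r^2)) = Real.exp (-(1/2)*r^2) * Real.exp (-(1/2)*r^2) := by
    rw [← Real.exp_add]; ring_nf
  calc r ^ k * Real.exp (-(r^2)) ≤ (1 + (r^2)^k) * Real.exp (-(r^2)) := by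
        apply mul_le_mul_of_nonneg_right h1 (Real.exp_nonneg _)
    _ ≤ (1 + 2^k * k.factorial * Real.exp ((1/2) * r^2)) * Real.exp (-(r^2)) := by
        apply mul_le_mul_of_nonneg_right (by linarith) (Real.exp_nonneg _)
    _ = Real.exp (-(r^2)) + 2^k * k.factorial * (Real.exp ((1/2)*r^2) * Real.exp (-(r^2))) := by ring
    _ = Real.exp (-(r^2)) + 2^k * k.factorial * Real.exp (-(1/2)*r^2) := by
        rw [← Real.exp_add]; ring_nf
    _ ≤ (1 + 2^k * k.factorial) * Real.exp (-(1/2) * r^2) := by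
        rw [hsplit]
        have h3 := Real.exp_nonneg (-(1/2)*r^2)
        have h4 : Real.exp (-(1/2)*r^2) ≤ 1 := Real.exp_le_one_iff.mpr (by nlinarith)
        have h5 : (0:ℝ) ≤ 2^k * k.factorial := by positivity
        nlinarith

lemma int1 (p q : ℕ) :
    Integrable (fun z : ℂ => z ^ p * (starRingEnd ℂ) z ^ q * Complex.exp (-(Complex.normSq z : ℂ))) := by
  have hc : Continuous (fun z : ℂ => z ^ p * (starRingEnd ℂ) z ^ q * Complex.exp (-(Complex.normSq z : ℂ))) :=
    ((continuous_pow p).mul ((Complex.continuous_conj.pow q))).mul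
      (Complex.continuous_exp.comp ((Complex.continuous_ofReal.comp Complex.continuous_normSq).neg))
  refine (gauss_half_int.const_mul ((1 + 2^(p+q) * (p+q).factorial))).mono'
    hc.aestronglyMeasurable ?_
  filter_upwards with z
  have h1 : ‖z ^ p * (starRingEnd ℂ) z ^ q * Complex.exp (-(Complex.normSq z : ℂ))‖
      = ‖z‖ ^ (p+q) * Real.exp (-(‖z‖ ^2)) := by
    rw [norm_mul, norm_mul, norm_pow, norm_pow, Complex.norm_conj, Complex.norm_exp]
    simp only [neg_re, ofReal_re]
    rw [Complex.normSq_eq_norm_sq, pow_add]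
  rw [h1]
  have hb := pow_mul_exp_bound (p+q) (norm_nonneg z)
  have h2 : ‖(1 : ℝ) + 2^(p+q) * ((p+q).factorial:ℝ)‖ = 1 + 2^(p+q) * ((p+q).factorial:ℝ) := by
    rw [Real.norm_eq_abs, _root_.abs_of_nonneg (by positivity)]
  calc ‖z‖ ^ (p+q) * Real.exp (-(‖z‖^2))
      ≤ (1 + 2^(p+q) * (p+q).factorial) * Real.exp (-(1/2) * ‖z‖^2) := hb
    _ = (1 + 2^(p+q) * ((p+q).factorial:ℝ)) * Real.exp (-(1/2) * Complex.normSq z) := by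
        rw [Complex.normSq_eq_norm_sq]


noncomputable def Mom (p q : ℕ) : ℂ :=
  ∫ z : ℂ, z ^ p * (starRingEnd ℂ) z ^ q * Complex.exp (-(Complex.normSq z : ℂ))

lemma mom_diag (p : ℕ) : Mom p p = (Real.pi : ℂ) * p.factorial := by
  have h1 : ∀ z : ℂ, z ^ p * (starRingEnd ℂ) z ^ p * Complex.exp (-(Complex.normSq z : ℂ))
      = ((Complex.normSq z ^ p * Real.exp (-(Complex.normSq z)) : ℝ) : ℂ) := by
    intro z
    rw [← mul_pow, Complex.mul_conj]
    push_cast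
    ring
  rw [Mom]
  simp_rw [h1]
  rw [show (∫ z : ℂ, ((Complex.normSq z ^ p * Real.exp (-(Complex.normSq z)) : ℝ) : ℂ))
      = (((∫ z : ℂ, Complex.normSq z ^ p * Real.exp (-(Complex.normSq z))) : ℝ) : ℂ) from integral_ofReal]
  have h2 : (∫ z : ℂ, Complex.normSq z ^ p * Real.exp (-(Complex.normSq z)))
      = ∫ z : ℂ, (fun y : ℝ => (y^2)^p * Real.exp (-(y^2))) ‖z‖ := by
    congr 1; funext z
    simp only [← Complex.normSq_eq_norm_sq]
  rw [h2, MeasureTheory.integral_fun_norm_addHaar volume (fun y : ℝ => (y^2)^p * Real.exp (-(y^2)))]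
  have hd : Module.finrank ℝ ℂ = 2 := Complex.finrank_real_complex
  rw [hd]
  have hb : volume.real (Metric.ball (0:ℂ) 1) = Real.pi := by
    rw [Measure.real, Complex.volume_ball]
    simp
  rw [hb]
  -- radial integral
  have hsub := integral_comp_rpow_Ioi (fun t : ℝ => t ^ p * Real.exp (-t)) (two_ne_zero (α := ℝ))
  have hG : (∫ y in Set.Ioi (0:ℝ), y ^ p * Real.exp (-y)) = (p.factorial : ℝ) := by
    rw [← Real.Gamma_nat_eq_factorial, Real.Gamma_eq_integral (by positivity : (0:ℝ) < p + 1)]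
    congr 1; funext x
    rw [add_sub_cancel_right, Real.rpow_natCast]
    ring
  rw [hG] at hsub
  have hL : (∫ x in Set.Ioi (0:ℝ), (|(2:ℝ)| * x ^ ((2:ℝ) - 1)) • (fun t : ℝ => t ^ p * Real.exp (-t)) (x ^ (2:ℝ)))
      = 2 * ∫ y in Set.Ioi (0:ℝ), y ^ (2-1) • ((y^2)^p * Real.exp (-(y^2))) := by
    rw [← MeasureTheory.integral_const_mul]
    congr 1; funext x
    have : x ^ ((2:ℝ) - 1) = x := by norm_num
    rw [this]
    have : x ^ (2:ℝ) = x ^ (2:ℕ) := by rw [← Real.rpow_natCast]; norm_num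
    rw [this]
    simp only [smul_eq_mul, pow_one, _root_.abs_two]
    ring
  rw [hL] at hsub
  have hJ : (∫ y in Set.Ioi (0:ℝ), y ^ (2-1) • ((y^2)^p * Real.exp (-(y^2)))) = (p.factorial : ℝ) / 2 := by
    linarith
  rw [hJ]
  simp only [smul_eq_mul, nsmul_eq_mul]
  push_cast
  ring

lemma mom_off (p q : ℕ) (hpq : p ≠ q) : Mom p q = 0 := by
  set θ : ℝ := Real.pi / ((p:ℝ) - (q:ℝ)) with hθ
  set u : Circle := Circle.exp θ with hu
  have hδ : (p:ℝ) - (q:ℝ) ≠ 0 := sub_ne_zero.mpr (by exact_mod_cast hpq)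
  have hmp : MeasurePreserving (rotation u) (volume : Measure ℂ) (volume : Measure ℂ) :=
    LinearIsometryEquiv.measurePreserving (rotation u)
  have hemb : MeasurableEmbedding (rotation u) :=
    (rotation u).toHomeomorph.measurableEmbedding
  have key : Mom p q
      = ∫ z : ℂ, (rotation u z) ^ p * (starRingEnd ℂ) (rotation u z) ^ q *
          Complex.exp (-(Complex.normSq (rotation u z) : ℂ)) := by
    rw [Mom]
    exact (hmp.integral_comp hemb _).symm
  have hrw : ∀ z : ℂ, (rotation u z) ^ p * (starRingEnd ℂ) (rotation u z) ^ q *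
      Complex.exp (-(Complex.normSq (rotation u z) : ℂ))
      = ((u:ℂ)^p * (starRingEnd ℂ) (u:ℂ) ^ q) *
        (z ^ p * (starRingEnd ℂ) z ^ q * Complex.exp (-(Complex.normSq z : ℂ))) := by
    intro z
    rw [rotation_apply]
    have hns : Complex.normSq ((u:ℂ) * z) = Complex.normSq z := by
      rw [_root_.map_mul, Complex.normSq_eq_norm_sq (u:ℂ), Circle.norm_coe]
      norm_num
    rw [hns, mul_pow, _root_.map_mul, mul_pow]
    ring
  have key2 : Mom p q = ((u:ℂ)^p * (starRingEnd ℂ) (u:ℂ) ^ q) * Mom p q := by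
    conv_lhs => rw [key]
    simp_rw [hrw]
    rw [integral_const_mul]
    rfl
  have hc : (u:ℂ)^p * (starRingEnd ℂ) (u:ℂ) ^ q = -1 := by
    rw [hu, Circle.coe_exp, ← Complex.exp_conj, _root_.map_mul, Complex.conj_ofReal, Complex.conj_I,
      ← Complex.exp_nat_mul, ← Complex.exp_nat_mul, ← Complex.exp_add]
    have : (p:ℂ) * ((θ:ℝ) * Complex.I) + (q:ℂ) * ((θ:ℝ) * -Complex.I)
        = (((p:ℝ) - (q:ℝ)) * θ : ℝ) * Complex.I := by push_cast; ring
    rw [this]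
    have : ((p:ℝ) - (q:ℝ)) * θ = Real.pi := by
      rw [hθ]; field_simp
    rw [this, Complex.exp_pi_mul_I]
  rw [hc] at key2
  have : Mom p q + Mom p q = 0 := by linear_combination key2
  exact (add_self_eq_zero).mp this

lemma mom_eq (p q : ℕ) :
    Mom p q = if p = q then (Real.pi : ℂ) * p.factorial else 0 := by
  by_cases h : p = q
  · subst h; rw [if_pos rfl, mom_diag]
  · rw [if_neg h, mom_off p q h]


variable {ι κ : Type*} [Fintype ι] [DecidableEq ι] [Fintype κ] [DecidableEq κ]

lemma ex_perm {f g : ι → κ}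
    (h : ∀ a, Fintype.card {i // f i = a} = Fintype.card {i // g i = a}) :
    ∃ τ : Equiv.Perm ι, f ∘ τ = g := by
  let e : ∀ a, {i // g i = a} ≃ {i // f i = a} := fun a => Fintype.equivOfCardEq (h a).symm
  refine ⟨((Equiv.sigmaFiberEquiv g).symm.trans (Equiv.sigmaCongrRight e)).trans
    (Equiv.sigmaFiberEquiv f), funext fun i => ?_⟩
  exact (e (g i) ⟨i, rfl⟩).2

lemma count_comp {f : ι → κ} (τ : Equiv.Perm ι) (a : κ) :
    Fintype.card {i // f (τ i) = a} = Fintype.card {i // f i = a} :=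
  Fintype.card_congr (τ.subtypeEquiv fun _ => Iff.rfl)

lemma card_sol (f g : ι → κ) :
    Fintype.card {σ : Equiv.Perm ι // f ∘ σ = g} =
      if (∀ a, Fintype.card {i // f i = a} = Fintype.card {i // g i = a})
      then ∏ a, (Fintype.card {i // f i = a}).factorial else 0 := by
  by_cases h : ∀ a, Fintype.card {i // f i = a} = Fintype.card {i // g i = a}
  · obtain ⟨τ, hτ⟩ := ex_perm h
    rw [if_pos h, ← DomMulAct.stabilizer_card f]
    apply Fintype.card_congr
    refine ⟨fun σp => ⟨τ.symm.trans σp.1, funext fun x => ?_⟩,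
      fun ρp => ⟨τ.trans ρp.1, funext fun x => ?_⟩, fun σp => ?_, fun ρp => ?_⟩
    · show f (σp.1 (τ.symm x)) = f x
      have h1 : f (σp.1 (τ.symm x)) = g (τ.symm x) := congrFun σp.2 (τ.symm x)
      have h2 : f (τ (τ.symm x)) = g (τ.symm x) := congrFun hτ (τ.symm x)
      rw [h1, ← h2, Equiv.apply_symm_apply]
    · show f (ρp.1 (τ x)) = g x
      have h1 : f (ρp.1 (τ x)) = f (τ x) := congrFun ρp.2 (τ x)
      rw [h1]; exact congrFun hτ x
    · ext x; simp
    · ext x; simp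
  · rw [if_neg h, Fintype.card_eq_zero_iff]
    constructor
    rintro ⟨σ, hσ⟩
    apply h
    intro a
    have h1 : Fintype.card {i // f (σ i) = a} = Fintype.card {i // f i = a} := count_comp σ a
    have h2 : Fintype.card {i // f (σ i) = a} = Fintype.card {i // g i = a} := by
      apply Fintype.card_congr
      apply Equiv.subtypeEquivRight
      intro i
      rw [show f (σ i) = g i from congrFun hσ i]
    rw [← h1, h2]

lemma comb (f : ι → κ) (X : (ι → κ) → ℂ) :
    ∑ σ : Equiv.Perm ι, X (f ∘ σ) =
      ∑ g : ι → κ, (if (∀ a, Fintype.card {i // f i = a} = Fintype.card {i // g i = a})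
        then ((∏ a, (Fintype.card {i // f i = a}).factorial : ℕ) : ℂ) else 0) * X g := by
  classical
  calc ∑ σ : Equiv.Perm ι, X (f ∘ σ)
      = ∑ σ : Equiv.Perm ι, ∑ g : ι → κ, if f ∘ σ = g then X g else 0 := by
        refine Finset.sum_congr rfl fun σ _ => ?_
        rw [Finset.sum_ite_eq Finset.univ (f ∘ σ) X]
        simp
    _ = ∑ g : ι → κ, ∑ σ : Equiv.Perm ι, if f ∘ σ = g then X g else 0 := Finset.sum_comm
    _ = ∑ g : ι → κ, (Fintype.card {σ : Equiv.Perm ι // f ∘ σ = g} : ℂ) * X g := by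
        refine Finset.sum_congr rfl fun g _ => ?_
        rw [Finset.sum_ite, Finset.sum_const, Finset.sum_const_zero, add_zero,
          Fintype.card_subtype, nsmul_eq_mul]
    _ = _ := by
        refine Finset.sum_congr rfl fun g _ => ?_
        rw [card_sol]
        split_ifs <;> simp



section main

variable {n d : ℕ} (V : Matrix (Fin n) (Fin d) ℂ)

-- fiber count
local notation "c" => fun (f : Fin n → Fin d) (a : Fin d) => Fintype.card {i // f i = a}

lemma prod_fiber (f : Fin n → Fin d) (z : Fin d → ℂ) :
    ∏ i, z (f i) = ∏ a, z a ^ (Fintype.card {i // f i = a}) := by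
  classical
  calc ∏ i, z (f i)
      = ∏ a, ∏ i ∈ Finset.univ.filter (fun i => f i = a), z (f i) :=
        (Finset.prod_fiberwise_of_maps_to (fun i _ => Finset.mem_univ (f i)) (fun i => z (f i))).symm
    _ = ∏ a, z a ^ (Fintype.card {i // f i = a}) := by
        refine Finset.prod_congr rfl fun a _ => ?_
        rw [Fintype.card_subtype]
        rw [show ∏ i ∈ Finset.univ.filter (fun i => f i = a), z (f i)
            = ∏ i ∈ Finset.univ.filter (fun i => f i = a), z a from
          Finset.prod_congr rfl fun i hi => by rw [(Finset.mem_filter.mp hi).2]]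
        rw [Finset.prod_const]

noncomputable def Pc (f : Fin n → Fin d) : ℂ := ∏ i, (starRingEnd ℂ) (V i (f i))
noncomputable def Qc (g : Fin n → Fin d) : ℂ := ∏ i, V i (g i)

noncomputable def Tc (f g : Fin n → Fin d) (z : Fin d → ℂ) : ℂ :=
  (Pc V f * Qc V g) *
    ∏ a, (fun w : ℂ => w ^ (c f a) * (starRingEnd ℂ) w ^ (c g a) *
      Complex.exp (-(Complex.normSq w : ℂ))) (z a)

lemma expandG (z : Fin d → ℂ) :
    (∏ i, ((star (V i) ⬝ᵥ z) * (starRingEnd ℂ) (star (V i) ⬝ᵥ z))) *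
        Complex.exp (-(∑ a, (Complex.normSq (z a) : ℂ)))
      = ∑ f : Fin n → Fin d, ∑ g : Fin n → Fin d, Tc V f g z := by
  have hw : ∀ i, star (V i) ⬝ᵥ z = ∑ a, (starRingEnd ℂ) (V i a) * z a := by
    intro i
    simp only [dotProduct, Pi.star_apply, starRingEnd_apply]
  have hwc : ∀ i, (starRingEnd ℂ) (star (V i) ⬝ᵥ z) = ∑ a, V i a * (starRingEnd ℂ) (z a) := by
    intro i
    rw [hw, map_sum]
    refine Finset.sum_congr rfl fun a _ => ?_
    rw [_root_.map_mul, Complex.conj_conj]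
  have hexp : Complex.exp (-(∑ a, (Complex.normSq (z a) : ℂ)))
      = ∏ a, Complex.exp (-(Complex.normSq (z a) : ℂ)) := by
    rw [← Complex.exp_sum]
    congr 1
    rw [Finset.sum_neg_distrib]
  calc (∏ i, ((star (V i) ⬝ᵥ z) * (starRingEnd ℂ) (star (V i) ⬝ᵥ z))) *
        Complex.exp (-(∑ a, (Complex.normSq (z a) : ℂ)))
      = (∏ i, (star (V i) ⬝ᵥ z)) * (∏ i, (starRingEnd ℂ) (star (V i) ⬝ᵥ z)) *
          ∏ a, Complex.exp (-(Complex.normSq (z a) : ℂ)) := by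
        rw [Finset.prod_mul_distrib, hexp]
    _ = (∑ f : Fin n → Fin d, ∏ i, ((starRingEnd ℂ) (V i (f i)) * z (f i))) *
          (∑ g : Fin n → Fin d, ∏ i, (V i (g i) * (starRingEnd ℂ) (z (g i)))) *
          ∏ a, Complex.exp (-(Complex.normSq (z a) : ℂ)) := by
        simp_rw [hwc, hw]
        rw [Finset.prod_univ_sum, Finset.prod_univ_sum, Fintype.piFinset_univ]
    _ = (∑ f : Fin n → Fin d, Pc V f * ∏ a, (z a) ^ (c f a)) *
          (∑ g : Fin n → Fin d, Qc V g * ∏ a, ((starRingEnd ℂ) (z a)) ^ (c g a)) *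
          ∏ a, Complex.exp (-(Complex.normSq (z a) : ℂ)) := by
        congr 1
        congr 1
        · refine Finset.sum_congr rfl fun f _ => ?_
          rw [Finset.prod_mul_distrib, Pc, prod_fiber f z]
        · refine Finset.sum_congr rfl fun g _ => ?_
          rw [Finset.prod_mul_distrib, Qc, prod_fiber g (fun a => (starRingEnd ℂ) (z a))]
    _ = ∑ f : Fin n → Fin d, ∑ g : Fin n → Fin d, Tc V f g z := by
        rw [Finset.sum_mul_sum, Finset.sum_mul]
        refine Finset.sum_congr rfl fun f _ => ?_
        rw [Finset.sum_mul]
        refine Finset.sum_congr rfl fun g _ => ?_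
        simp only [Tc, Finset.prod_mul_distrib]
        ring

lemma intT (f g : Fin n → Fin d) : Integrable (Tc V f g) := by
  apply Integrable.const_mul
  exact Integrable.fintype_prod_dep (fun a => int1 (c f a) (c g a))

lemma integralT (f g : Fin n → Fin d) :
    ∫ z : Fin d → ℂ, Tc V f g z
      = (Pc V f * Qc V g) * ∏ a, Mom (c f a) (c g a) := by
  simp only [Tc]
  rw [MeasureTheory.integral_const_mul]
  exact congrArg _ (MeasureTheory.integral_fintype_prod_eq_prod (ι := Fin d)
    (fun a (w : ℂ) => w ^ (c f a) * (starRingEnd ℂ) w ^ (c g a) *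
      Complex.exp (-(Complex.normSq w : ℂ))))

lemma prodMom (f g : Fin n → Fin d) :
    ∏ a, Mom (c f a) (c g a)
      = if (∀ a, c f a = c g a)
        then ((Real.pi : ℂ))^d * ((∏ a, (c f a).factorial : ℕ) : ℂ) else 0 := by
  classical
  simp_rw [mom_eq]
  by_cases h : ∀ a, c f a = c g a
  · rw [if_pos h]
    rw [show ∏ a, (if c f a = c g a then (Real.pi : ℂ) * (c f a).factorial else 0)
        = ∏ a : Fin d, ((Real.pi : ℂ) * (c f a).factorial) from
      Finset.prod_congr rfl fun a _ => if_pos (h a)]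
    rw [Finset.prod_mul_distrib, Finset.prod_const, Finset.card_univ, Fintype.card_fin]
    push_cast
    ring
  · rw [if_neg h]
    push_neg at h
    obtain ⟨a, ha⟩ := h
    exact Finset.prod_eq_zero (Finset.mem_univ a) (if_neg ha)

lemma integralG :
    (∫ z : Fin d → ℂ, (∏ i, ((star (V i) ⬝ᵥ z) * (starRingEnd ℂ) (star (V i) ⬝ᵥ z))) *
        Complex.exp (-(∑ a, (Complex.normSq (z a) : ℂ))))
      = ((Real.pi : ℂ))^d * (V * Vᴴ).permanent := by
  classical
  have h1 : (∫ z : Fin d → ℂ, (∏ i, ((star (V i) ⬝ᵥ z) * (starRingEnd ℂ) (star (V i) ⬝ᵥ z))) *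
        Complex.exp (-(∑ a, (Complex.normSq (z a) : ℂ))))
      = ∑ f : Fin n → Fin d, ∑ g : Fin n → Fin d, ∫ z : Fin d → ℂ, Tc V f g z := by
    simp_rw [expandG V]
    rw [MeasureTheory.integral_finset_sum _ (fun f _ => integrable_finset_sum _ (fun g _ => intT V f g))]
    exact Finset.sum_congr rfl fun f _ =>
      MeasureTheory.integral_finset_sum _ (fun g _ => intT V f g)
  rw [h1]
  simp_rw [integralT V]
  simp_rw [prodMom]
  -- permanent side
  have h2 : (V * Vᴴ).permanent
      = ∑ f : Fin n → Fin d, Pc V f * ∑ σ : Equiv.Perm (Fin n), Qc V (f ∘ σ) := by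
    rw [Matrix.permanent]
    have h3 : ∀ σ : Equiv.Perm (Fin n), ∏ i, (V * Vᴴ) (σ i) i
        = ∑ f : Fin n → Fin d, (∏ i, V (σ i) (f i)) * Pc V f := by
      intro σ
      have : ∀ i, (V * Vᴴ) (σ i) i = ∑ a, V (σ i) a * (starRingEnd ℂ) (V i a) := by
        intro i
        simp only [Matrix.mul_apply, Matrix.conjTranspose_apply, starRingEnd_apply]
      simp_rw [this]
      rw [Finset.prod_univ_sum]
      exact Finset.sum_congr rfl fun f _ => by rw [Finset.prod_mul_distrib, Pc]
    simp_rw [h3]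
    rw [Finset.sum_comm]
    refine Finset.sum_congr rfl fun f _ => ?_
    rw [Finset.mul_sum]
    refine Fintype.sum_bijective (fun σ : Equiv.Perm (Fin n) => σ⁻¹)
      (Function.Involutive.bijective (fun σ => by simp)) _ _ fun σ => ?_
    have h4 : ∏ i, V (σ i) (f i) = Qc V (f ∘ (σ⁻¹ : Equiv.Perm (Fin n))) :=
      calc ∏ i, V (σ i) (f i)
          = ∏ i, V (σ i) (f ((σ⁻¹ : Equiv.Perm (Fin n)) (σ i))) :=
            (Finset.prod_congr rfl fun i _ => by rw [← Equiv.Perm.mul_apply, inv_mul_cancel, Equiv.Perm.one_apply]).symm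
        _ = ∏ i, V i (f ((σ⁻¹ : Equiv.Perm (Fin n)) i)) :=
            Equiv.prod_comp σ (fun j => V j (f ((σ⁻¹ : Equiv.Perm (Fin n)) j)))
        _ = Qc V (f ∘ (σ⁻¹ : Equiv.Perm (Fin n))) := rfl
    rw [h4]
    ring
  rw [h2]
  rw [Finset.mul_sum]
  refine Finset.sum_congr rfl fun f _ => ?_
  rw [comb f (Qc V), Finset.mul_sum, Finset.mul_sum]
  refine Finset.sum_congr rfl fun g _ => ?_
  split_ifs <;> ring

end main


theorem stmt3 {n d : ℕ} (V : Matrix (Fin n) (Fin d) ℂ) :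
    (V * Vᴴ).permanent =
      Complex.ofReal (((Real.pi) ^ d)⁻¹ *
        ∫ z : Fin d → ℂ,
          (∏ i, Complex.normSq (star (V i) ⬝ᵥ z)) *
            Real.exp (-(∑ a, Complex.normSq (z a)))) := by
  have hR : (((∫ z : Fin d → ℂ,
      (∏ i, Complex.normSq (star (V i) ⬝ᵥ z)) * Real.exp (-(∑ a, Complex.normSq (z a)))) : ℝ) : ℂ)
      = ((Real.pi : ℂ))^d * (V * Vᴴ).permanent := by
    rw [show (((∫ z : Fin d → ℂ,
        (∏ i, Complex.normSq (star (V i) ⬝ᵥ z)) * Real.exp (-(∑ a, Complex.normSq (z a)))) : ℝ) : ℂ)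
        = ∫ z : Fin d → ℂ, (((∏ i, Complex.normSq (star (V i) ⬝ᵥ z)) *
            Real.exp (-(∑ a, Complex.normSq (z a))) : ℝ) : ℂ) from (integral_ofReal).symm]
    rw [← integralG V]
    congr 1
    funext z
    rw [Complex.ofReal_mul, Complex.ofReal_prod, Complex.ofReal_exp, Complex.ofReal_neg,
      Complex.ofReal_sum]
    congr 1
    exact Finset.prod_congr rfl fun i _ => (Complex.mul_conj _).symm
  rw [Complex.ofReal_mul, hR, Complex.ofReal_inv, Complex.ofReal_pow, ← mul_assoc,
    inv_mul_cancel₀ (pow_ne_zero _ (by exact_mod_cast Real.pi_ne_zero : (Real.pi : ℂ) ≠ 0)),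
    one_mul]

end WickAux
end

section
/- Let V ∈ ℂ^{n×d} have full column rank and rows v₁,…,vₙ, all nonzero. Then the supremum defining Φ(V) = sup over Hermitian positive definite d×d matrices X of φ_V(X) = ∑_{i=1}^n log(vᵢ† X vᵢ) + log det X − tr X + d is finite and is attained at some Hermitian positive definite matrix X⋆. -/
open MeasureTheory Matrix
open scoped ComplexOrder

/-- The objective `φ_V(X) = ∑ᵢ log(vᵢ† X vᵢ) + log det X − tr X + d`. -/
noncomputable def phiV {n d : ℕ} (V : Matrix (Fin n) (Fin d) ℂ)
    (X : Matrix (Fin d) (Fin d) ℂ) : ℝ :=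
  (∑ i, Real.log ((star (V i) ⬝ᵥ X *ᵥ V i).re)) + Real.log X.det.re - X.trace.re + d

namespace PhiVAux

variable {d : ℕ}

lemma star_mul_self_unitary {X : Matrix (Fin d) (Fin d) ℂ} (hX : X.IsHermitian) :
    star (hX.eigenvectorUnitary : Matrix (Fin d) (Fin d) ℂ) *
      (hX.eigenvectorUnitary : Matrix (Fin d) (Fin d) ℂ) = 1 :=
  Unitary.coe_star_mul_self hX.eigenvectorUnitary

lemma mul_self_star_unitary {X : Matrix (Fin d) (Fin d) ℂ} (hX : X.IsHermitian) :
    (hX.eigenvectorUnitary : Matrix (Fin d) (Fin d) ℂ) *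
      star (hX.eigenvectorUnitary : Matrix (Fin d) (Fin d) ℂ) = 1 :=
  Unitary.coe_mul_star_self hX.eigenvectorUnitary

lemma trace_conj_diag {X : Matrix (Fin d) (Fin d) ℂ} (hX : X.IsHermitian) (f : Fin d → ℂ) :
    ((hX.eigenvectorUnitary : Matrix (Fin d) (Fin d) ℂ) * diagonal f *
      (star hX.eigenvectorUnitary : Matrix (Fin d) (Fin d) ℂ)).trace = ∑ k, f k := by
  rw [Matrix.trace_mul_cycle, star_mul_self_unitary hX, Matrix.one_mul, Matrix.trace_diagonal]

lemma trace_eq_sum_eig {X : Matrix (Fin d) (Fin d) ℂ} (hX : X.IsHermitian) :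
    X.trace = ∑ k, (hX.eigenvalues k : ℂ) := by
  conv_lhs => rw [hX.spectral_theorem, Unitary.conjStarAlgAut_apply]
  rw [trace_conj_diag hX]
  simp

lemma sq_spectral {X : Matrix (Fin d) (Fin d) ℂ} (hX : X.IsHermitian) :
    X * X = (hX.eigenvectorUnitary : Matrix (Fin d) (Fin d) ℂ) *
      diagonal (fun k => ((hX.eigenvalues k : ℂ) * (hX.eigenvalues k : ℂ))) *
      (star hX.eigenvectorUnitary : Matrix (Fin d) (Fin d) ℂ) := by
  have h := hX.spectral_theorem
  rw [Unitary.conjStarAlgAut_apply] at h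
  set U : Matrix (Fin d) (Fin d) ℂ := (hX.eigenvectorUnitary : Matrix (Fin d) (Fin d) ℂ) with hUdef
  set D : Matrix (Fin d) (Fin d) ℂ := diagonal (RCLike.ofReal ∘ hX.eigenvalues) with hD
  have hsU : star U * U = 1 := star_mul_self_unitary hX
  have key : X * X = U * (D * D) * star U := by
    rw [h]
    simp only [← Matrix.mul_assoc]
    rw [Matrix.mul_assoc (U * D), hsU, Matrix.mul_one, Matrix.mul_assoc U D D]
  rw [key, hD, Matrix.diagonal_mul_diagonal]
  rfl

lemma quad_eq_sum {X : Matrix (Fin d) (Fin d) ℂ} (hX : X.IsHermitian) (v : Fin d → ℂ) :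
    star v ⬝ᵥ X *ᵥ v = ∑ k, ((hX.eigenvalues k : ℂ) *
      Complex.normSq ((star (hX.eigenvectorUnitary : Matrix (Fin d) (Fin d) ℂ) *ᵥ v) k)) := by
  set U : Matrix (Fin d) (Fin d) ℂ := (hX.eigenvectorUnitary : Matrix (Fin d) (Fin d) ℂ) with hU
  set w : Fin d → ℂ := star U *ᵥ v with hw
  have hsw : star w = star v ᵥ* U := by
    rw [hw, star_mulVec, Matrix.star_eq_conjTranspose, conjTranspose_conjTranspose]
  conv_lhs => rw [hX.spectral_theorem, Unitary.conjStarAlgAut_apply]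
  rw [Matrix.mul_assoc, ← Matrix.mulVec_mulVec, dotProduct_mulVec, ← hsw, ← Matrix.mulVec_mulVec]
  rw [dotProduct, ← hw]
  congr 1
  ext k
  rw [mulVec_diagonal]
  simp only [Function.comp_apply, Pi.star_apply, RCLike.star_def]
  rw [← mul_assoc, mul_comm (starRingEnd ℂ (w k)), mul_assoc,
    ← Complex.normSq_eq_conj_mul_self]
  rfl

lemma norm_w_eq {X : Matrix (Fin d) (Fin d) ℂ} (hX : X.IsHermitian) (v : Fin d → ℂ) :
    ∑ k, Complex.normSq ((star (hX.eigenvectorUnitary : Matrix (Fin d) (Fin d) ℂ) *ᵥ v) k)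
      = ∑ j, Complex.normSq (v j) := by
  set U : Matrix (Fin d) (Fin d) ℂ := (hX.eigenvectorUnitary : Matrix (Fin d) (Fin d) ℂ) with hU
  set w : Fin d → ℂ := star U *ᵥ v with hw
  have hsw : star w = star v ᵥ* U := by
    rw [hw, star_mulVec, Matrix.star_eq_conjTranspose, conjTranspose_conjTranspose]
  have key : star w ⬝ᵥ w = star v ⬝ᵥ v := by
    rw [hsw, hw, ← dotProduct_mulVec, Matrix.mulVec_mulVec,
      mul_self_star_unitary hX, Matrix.one_mulVec]
  have h1 : ∀ u : Fin d → ℂ, star u ⬝ᵥ u = ((∑ k, Complex.normSq (u k) : ℝ) : ℂ) := by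
    intro u
    rw [dotProduct]
    push_cast
    congr 1; ext k
    simp only [Pi.star_apply, RCLike.star_def]
    rw [mul_comm]
    exact Complex.mul_conj (u k)
  have := key
  rw [h1, h1] at this
  exact_mod_cast this

lemma conj_diag_posSemidef {X : Matrix (Fin d) (Fin d) ℂ} (hX : X.IsHermitian)
    {g : Fin d → ℝ} (hg : ∀ k, 0 ≤ g k) :
    ((hX.eigenvectorUnitary : Matrix (Fin d) (Fin d) ℂ) *
      diagonal (fun k => (g k : ℂ)) *
      (star hX.eigenvectorUnitary : Matrix (Fin d) (Fin d) ℂ)).PosSemidef := by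
  have h : Matrix.PosSemidef (diagonal (fun k => (g k : ℂ))) :=
    posSemidef_diagonal_iff.mpr fun k => Complex.zero_le_real.mpr (hg k)
  have := h.mul_mul_conjTranspose_same (hX.eigenvectorUnitary : Matrix (Fin d) (Fin d) ℂ)
  rwa [← Matrix.star_eq_conjTranspose] at this

lemma smul_one_eq_conj {X : Matrix (Fin d) (Fin d) ℂ} (hX : X.IsHermitian) (c : ℂ) :
    c • (1 : Matrix (Fin d) (Fin d) ℂ) =
      (hX.eigenvectorUnitary : Matrix (Fin d) (Fin d) ℂ) * (c • 1) *
      (star hX.eigenvectorUnitary : Matrix (Fin d) (Fin d) ℂ) := by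
  rw [Matrix.mul_smul, Matrix.mul_one, Matrix.smul_mul, mul_self_star_unitary hX]

lemma diagonal_sub_smul_one (μ : Fin d → ℝ) (c : ℝ) :
    diagonal (RCLike.ofReal ∘ μ) - (c : ℂ) • (1 : Matrix (Fin d) (Fin d) ℂ)
      = diagonal (fun k => ((μ k - c : ℝ) : ℂ)) := by
  ext i j
  by_cases h : i = j <;>
    simp [h, Matrix.one_apply, Matrix.diagonal_apply, Complex.ofReal_sub]

lemma sub_smul_one_posSemidef {X : Matrix (Fin d) (Fin d) ℂ} (hX : X.IsHermitian) {ε : ℝ}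
    (h : ∀ k, ε ≤ hX.eigenvalues k) :
    (X - (ε : ℂ) • 1).PosSemidef := by
  have key : X - (ε : ℂ) • 1 =
      (hX.eigenvectorUnitary : Matrix (Fin d) (Fin d) ℂ) *
      diagonal (fun k => ((hX.eigenvalues k - ε : ℝ) : ℂ)) *
      (star hX.eigenvectorUnitary : Matrix (Fin d) (Fin d) ℂ) := by
    conv_lhs => rw [hX.spectral_theorem, Unitary.conjStarAlgAut_apply, smul_one_eq_conj hX (ε : ℂ)]
    rw [← Matrix.sub_mul, ← Matrix.mul_sub, diagonal_sub_smul_one]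
  rw [key]
  exact conj_diag_posSemidef hX fun k => by linarith [h k]

lemma smul_one_sub_posSemidef {X : Matrix (Fin d) (Fin d) ℂ} (hX : X.IsHermitian) {T : ℝ}
    (h : ∀ k, hX.eigenvalues k ≤ T) :
    ((T : ℂ) • 1 - X).PosSemidef := by
  have key : (T : ℂ) • (1 : Matrix (Fin d) (Fin d) ℂ) - X =
      (hX.eigenvectorUnitary : Matrix (Fin d) (Fin d) ℂ) *
      diagonal (fun k => ((T - hX.eigenvalues k : ℝ) : ℂ)) *
      (star hX.eigenvectorUnitary : Matrix (Fin d) (Fin d) ℂ) := by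
    conv_lhs => rw [hX.spectral_theorem, Unitary.conjStarAlgAut_apply, smul_one_eq_conj hX (T : ℂ)]
    rw [← Matrix.sub_mul, ← Matrix.mul_sub]
    congr 2
    ext i j
    by_cases hij : i = j <;>
      simp [hij, Matrix.one_apply, Matrix.diagonal_apply, Complex.ofReal_sub]
  rw [key]
  exact conj_diag_posSemidef hX fun k => by linarith [h k]

lemma quad_continuous (v : Fin d → ℂ) :
    Continuous fun X : Matrix (Fin d) (Fin d) ℂ => star v ⬝ᵥ X *ᵥ v :=
  continuous_const.dotProduct (continuous_id.matrix_mulVec continuous_const)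

lemma isClosed_posSemidef : IsClosed {A : Matrix (Fin d) (Fin d) ℂ | A.PosSemidef} := by
  have h1 : IsClosed {A : Matrix (Fin d) (Fin d) ℂ | A.IsHermitian} := by
    have : Continuous fun A : Matrix (Fin d) (Fin d) ℂ => Aᴴ :=
      continuous_id.matrix_conjTranspose
    exact isClosed_eq this continuous_id
  have h2 : ∀ x : Fin d → ℂ,
      IsClosed {A : Matrix (Fin d) (Fin d) ℂ | 0 ≤ star x ⬝ᵥ A *ᵥ x} := by
    intro x
    have hc := quad_continuous x
    have heq : {A : Matrix (Fin d) (Fin d) ℂ | 0 ≤ star x ⬝ᵥ A *ᵥ x} =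
        (fun A : Matrix (Fin d) (Fin d) ℂ => star x ⬝ᵥ A *ᵥ x) ⁻¹' {z : ℂ | 0 ≤ z} := rfl
    rw [heq]
    refine IsClosed.preimage hc ?_
    have : {z : ℂ | 0 ≤ z} = Complex.re ⁻¹' (Set.Ici 0) ∩ Complex.im ⁻¹' {0} := by
      ext z
      simp only [Set.mem_setOf_eq, Set.mem_inter_iff, Set.mem_preimage, Set.mem_Ici,
        Set.mem_singleton_iff, Complex.le_def]
      constructor
      · rintro ⟨ha, hb⟩; exact ⟨by simpa using ha, by simpa using hb.symm⟩
      · rintro ⟨ha, hb⟩; exact ⟨by simpa using ha, by simp [hb]⟩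
    rw [this]
    exact (isClosed_Ici.preimage Complex.continuous_re).inter
      (isClosed_singleton.preimage Complex.continuous_im)
  have heq : {A : Matrix (Fin d) (Fin d) ℂ | A.PosSemidef} =
      {A : Matrix (Fin d) (Fin d) ℂ | A.IsHermitian} ∩
        ⋂ x : Fin d → ℂ, {A | 0 ≤ star x ⬝ᵥ A *ᵥ x} := by
    ext A
    simp only [Set.mem_setOf_eq, Set.mem_inter_iff, Set.mem_iInter]
    exact ⟨fun h => ⟨h.1, h.dotProduct_mulVec_nonneg⟩, fun h => .of_dotProduct_mulVec_nonneg h.1 h.2⟩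
  rw [heq]
  exact h1.inter (isClosed_iInter h2)

lemma isCompact_of_bounded_closed {K : Set (Matrix (Fin d) (Fin d) ℂ)} {R : ℝ}
    (hcl : IsClosed K) (hb : ∀ X ∈ K, ∀ i j, ‖X i j‖ ≤ R) : IsCompact K := by
  have hpi : IsCompact (Set.univ.pi fun _ : Fin d =>
      (Set.univ.pi fun _ : Fin d => Metric.closedBall (0 : ℂ) R)) := by
    refine isCompact_univ_pi fun i => isCompact_univ_pi fun j => ?_
    exact isCompact_closedBall 0 R
  have hof : Continuous fun g : Fin d → Fin d → ℂ => Matrix.of g :=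
    continuous_matrix fun i j => (continuous_apply j).comp (continuous_apply i)
  have himg : IsCompact ((fun g : Fin d → Fin d → ℂ => Matrix.of g) ''
      (Set.univ.pi fun _ => Set.univ.pi fun _ => Metric.closedBall (0 : ℂ) R)) :=
    hpi.image hof
  refine himg.of_isClosed_subset hcl ?_
  intro X hX
  refine ⟨fun i j => X i j, ?_, rfl⟩
  intro i _
  intro j _
  simpa [Metric.mem_closedBall, dist_zero_right] using hb X hX i j

lemma sum_normSq_eq {X : Matrix (Fin d) (Fin d) ℂ} (hX : X.IsHermitian) :
    ∑ i, ∑ j, Complex.normSq (X i j) = ∑ k, hX.eigenvalues k * hX.eigenvalues k := by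
  have ha : (X * X).trace = ∑ k, ((hX.eigenvalues k : ℂ) * hX.eigenvalues k) := by
    rw [sq_spectral hX, trace_conj_diag hX]
  have hb : (X * X).trace = ∑ i, ∑ j, (Complex.normSq (X i j) : ℂ) := by
    rw [Matrix.trace]
    congr 1
    ext i
    rw [Matrix.diag_apply, Matrix.mul_apply]
    congr 1
    ext j
    have h1 : X j i = (starRingEnd ℂ) (X i j) := by
      rw [← hX.apply j i]; rfl
    rw [h1, Complex.mul_conj]
  have := hb.symm.trans ha
  exact_mod_cast this

lemma entry_norm_bound {X : Matrix (Fin d) (Fin d) ℂ} (hX : X.IsHermitian) {T : ℝ}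
    (h0 : ∀ k, 0 ≤ hX.eigenvalues k) (hT : ∀ k, hX.eigenvalues k ≤ T) (i j : Fin d) :
    ‖X i j‖ ≤ Real.sqrt (d * T ^ 2) := by
  have hsum := sum_normSq_eq hX
  have h1 : Complex.normSq (X i j) ≤ ∑ i, ∑ j, Complex.normSq (X i j) := by
    calc Complex.normSq (X i j) ≤ ∑ j, Complex.normSq (X i j) := by
          refine Finset.single_le_sum (fun k _ => Complex.normSq_nonneg _) (Finset.mem_univ j)
      _ ≤ _ := Finset.single_le_sum
          (fun k _ => Finset.sum_nonneg fun l _ => Complex.normSq_nonneg _) (Finset.mem_univ i)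
  have h2 : ∑ k, hX.eigenvalues k * hX.eigenvalues k ≤ (d : ℝ) * T ^ 2 := by
    calc ∑ k, hX.eigenvalues k * hX.eigenvalues k ≤ ∑ _k : Fin d, T ^ 2 := by
          refine Finset.sum_le_sum fun k _ => ?_
          have := h0 k; have := hT k
          nlinarith
      _ = (d : ℝ) * T ^ 2 := by simp [Finset.sum_const, nsmul_eq_mul]
  have h3 : Complex.normSq (X i j) ≤ (d : ℝ) * T ^ 2 := by
    rw [hsum] at h1; linarith
  have h4 : ‖X i j‖ = Real.sqrt (Complex.normSq (X i j)) := by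
    rw [Complex.norm_def]
  rw [h4]
  exact Real.sqrt_le_sqrt h3

lemma dot_star_self_eq (v : Fin d → ℂ) :
    star v ⬝ᵥ v = ((∑ j, Complex.normSq (v j) : ℝ) : ℂ) := by
  rw [dotProduct]
  push_cast
  congr 1; ext k
  simp only [Pi.star_apply, RCLike.star_def]
  rw [mul_comm]
  exact Complex.mul_conj (v k)

lemma dot_star_self_re (v : Fin d → ℂ) :
    (star v ⬝ᵥ v).re = ∑ j, Complex.normSq (v j) := by
  rw [dot_star_self_eq]; exact Complex.ofReal_re _

lemma phiV_one {n : ℕ} (V : Matrix (Fin n) (Fin d) ℂ) :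
    phiV V 1 = ∑ i, Real.log ((star (V i) ⬝ᵥ V i).re) := by
  unfold phiV
  simp [Matrix.one_mulVec, Matrix.det_one, Matrix.trace_one]

lemma eig_bounds {n : ℕ} (hd : 0 < d) (V : Matrix (Fin n) (Fin d) ℂ)
    (hrows : ∀ i, V i ≠ 0) :
    ∃ T ε : ℝ, 0 < ε ∧ ε ≤ 1 ∧ 1 ≤ T ∧
      ∀ X : Matrix (Fin d) (Fin d) ℂ, ∀ hX : X.PosDef, phiV V 1 ≤ phiV V X →
        (∀ k, ε ≤ hX.1.eigenvalues k) ∧ (∀ k, hX.1.eigenvalues k ≤ T) := by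
  classical
  set a : ℝ := 2 * ((n : ℝ) + d) with ha
  have hnd1 : (1 : ℝ) ≤ (n : ℝ) + d := by
    have h1 : (1 : ℝ) ≤ (d : ℝ) := by exact_mod_cast hd
    have h2 : (0 : ℝ) ≤ (n : ℝ) := Nat.cast_nonneg n
    linarith
  have ha0 : 0 < a := by rw [ha]; linarith
  set T : ℝ := max 1 (2 * d + a * Real.log a) with hTdef
  have hT1 : (1 : ℝ) ≤ T := le_max_left _ _
  have hT0 : (0 : ℝ) < T := lt_of_lt_of_le one_pos hT1
  have hlogT : 0 ≤ Real.log T := Real.log_nonneg hT1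
  set M : ℝ := ((n : ℝ) + d) * Real.log T + d with hMdef
  set ε : ℝ := min 1 (Real.exp (-M)) with hεdef
  have hε0 : 0 < ε := lt_min one_pos (Real.exp_pos _)
  refine ⟨T, ε, hε0, min_le_left _ _, hT1, ?_⟩
  intro X hX hφ
  set μ : Fin d → ℝ := hX.1.eigenvalues with hμ
  have hμpos : ∀ k, 0 < μ k := hX.eigenvalues_pos
  set s : ℝ := ∑ k, μ k with hs
  have hspos : 0 < s :=
    Finset.sum_pos (fun k _ => hμpos k) ⟨⟨0, hd⟩, Finset.mem_univ _⟩
  have hμles : ∀ k, μ k ≤ s := fun k =>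
    Finset.single_le_sum (fun j _ => (hμpos j).le) (Finset.mem_univ k)
  have htr : X.trace.re = s := by
    have h1 : X.trace = ((s : ℝ) : ℂ) := by
      rw [trace_eq_sum_eig hX.1, hs]
      push_cast
      rfl
    rw [h1, Complex.ofReal_re]
  have hdet : X.det.re = ∏ k, μ k := by
    have h1 : X.det = ((∏ k, μ k : ℝ) : ℂ) := by
      rw [hX.1.det_eq_prod_eigenvalues]
      push_cast
      rfl
    rw [h1, Complex.ofReal_re]
  set b : Fin n → ℝ := fun i => (star (V i) ⬝ᵥ V i).re with hb
  have hbpos : ∀ i, 0 < b i := by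
    intro i
    have h1 : (0 : ℂ) < star (V i) ⬝ᵥ V i := dotProduct_star_self_pos_iff.mpr (hrows i)
    exact (Complex.lt_def.mp h1).1
  set q : Fin n → ℝ := fun i => (star (V i) ⬝ᵥ X *ᵥ V i).re with hq
  have hqpos : ∀ i, 0 < q i := by
    intro i
    have h1 := hX.re_dotProduct_pos (hrows i)
    simp only [RCLike.re_to_complex] at h1
    exact h1
  have hqle : ∀ i, q i ≤ b i * s := by
    intro i
    have h1 := quad_eq_sum hX.1 (V i)
    have h2 := norm_w_eq hX.1 (V i)
    set nn : Fin d → ℝ := fun k =>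
      Complex.normSq ((star (hX.1.eigenvectorUnitary : Matrix (Fin d) (Fin d) ℂ) *ᵥ V i) k)
      with hnn
    have h3 : q i = ∑ k, μ k * nn k := by
      have h4 : star (V i) ⬝ᵥ X *ᵥ V i = ((∑ k, μ k * nn k : ℝ) : ℂ) := by
        rw [h1]
        push_cast
        rfl
      rw [hq]
      simp only
      rw [h4, Complex.ofReal_re]
    have h5 : b i = ∑ k, nn k := by
      rw [hb]
      simp only
      rw [dot_star_self_re, ← h2]
    rw [h3, h5]
    calc ∑ k, μ k * nn k ≤ ∑ k, s * nn k := by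
          refine Finset.sum_le_sum fun k _ => ?_
          exact mul_le_mul_of_nonneg_right (hμles k) (Complex.normSq_nonneg _)
      _ = (∑ k, nn k) * s := by rw [← Finset.mul_sum]; ring
  have hφX : phiV V X = (∑ i, Real.log (q i)) + Real.log (∏ k, μ k) - s + d := by
    unfold phiV
    rw [htr, hdet]
  have hφ1 : phiV V 1 = ∑ i, Real.log (b i) := phiV_one V
  -- step 1 : trace bound
  have hlogq : ∀ i, Real.log (q i) ≤ Real.log (b i) + Real.log s := by
    intro i
    calc Real.log (q i) ≤ Real.log (b i * s) := Real.log_le_log (hqpos i) (hqle i)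
      _ = _ := Real.log_mul (hbpos i).ne' hspos.ne'
  have hsumq : ∑ i, Real.log (q i) ≤ ∑ i, Real.log (b i) + (n : ℝ) * Real.log s := by
    calc ∑ i, Real.log (q i) ≤ ∑ i, (Real.log (b i) + Real.log s) :=
          Finset.sum_le_sum fun i _ => hlogq i
      _ = ∑ i, Real.log (b i) + (n : ℝ) * Real.log s := by
          rw [Finset.sum_add_distrib]
          simp [Finset.sum_const, nsmul_eq_mul]
  have hlogdet : Real.log (∏ k, μ k) ≤ (d : ℝ) * Real.log s := by
    have hprod : ∏ k, μ k ≤ s ^ d := by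
      have h := Finset.prod_le_prod (s := Finset.univ) (f := μ) (g := fun _ => s)
        (fun k _ => (hμpos k).le) (fun k _ => hμles k)
      simpa [Finset.prod_const] using h
    calc Real.log (∏ k, μ k) ≤ Real.log (s ^ d) :=
          Real.log_le_log (Finset.prod_pos fun k _ => hμpos k) hprod
      _ = (d : ℝ) * Real.log s := by rw [Real.log_pow]
  have hkey1 : s - d ≤ ((n : ℝ) + d) * Real.log s := by
    have h1 := hφ
    rw [hφX, hφ1] at h1
    have hdist : ((n : ℝ) + d) * Real.log s
        = (n : ℝ) * Real.log s + (d : ℝ) * Real.log s := by ring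
    linarith
  have hlogs : Real.log s ≤ s / a - 1 + Real.log a := by
    have hsa : s / a * a = s := div_mul_cancel₀ s ha0.ne'
    have h1 : Real.log s = Real.log (s / a) + Real.log a := by
      rw [← Real.log_mul (div_pos hspos ha0).ne' ha0.ne', hsa]
    have h2 : Real.log (s / a) ≤ s / a - 1 :=
      Real.log_le_sub_one_of_pos (div_pos hspos ha0)
    linarith
  have hsT : s ≤ T := by
    have h3 : ((n : ℝ) + d) * Real.log s ≤ ((n : ℝ) + d) * (s / a - 1 + Real.log a) :=
      mul_le_mul_of_nonneg_left hlogs (by linarith)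
    have h4 : ((n : ℝ) + d) * (s / a) = s / 2 := by
      rw [ha]
      field_simp
    have h5 : ((n : ℝ) + d) * Real.log a = (a / 2) * Real.log a := by
      rw [ha]; ring
    have h6 : s ≤ 2 * d + a * Real.log a := by
      have h7 : ((n : ℝ) + d) * (s / a - 1 + Real.log a)
          = s / 2 - ((n : ℝ) + d) + (a / 2) * Real.log a := by
        rw [mul_add, mul_sub, h4, h5, mul_one]
      have hla : 0 ≤ Real.log a := Real.log_nonneg (by linarith)
      linarith
    exact h6.trans (le_max_right _ _)
  have hμleT : ∀ k, μ k ≤ T := fun k => (hμles k).trans hsT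
  refine ⟨?_, hμleT⟩
  -- step 2 : lower eigenvalue bound
  intro k
  have hlogsT : Real.log s ≤ Real.log T := Real.log_le_log hspos hsT
  have hsumq2 : ∑ i, Real.log (q i) ≤ ∑ i, Real.log (b i) + (n : ℝ) * Real.log T := by
    have h1 : (n : ℝ) * Real.log s ≤ (n : ℝ) * Real.log T :=
      mul_le_mul_of_nonneg_left hlogsT (Nat.cast_nonneg n)
    linarith [hsumq]
  have hlogdet2 : Real.log (∏ j, μ j) ≤ Real.log (μ k) + (d : ℝ) * Real.log T := by
    rw [Real.log_prod (fun j _ => (hμpos j).ne')]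
    have hsplit : ∑ j, Real.log (μ j)
        = Real.log (μ k) + ∑ j ∈ Finset.univ.erase k, Real.log (μ j) :=
      (Finset.add_sum_erase _ _ (Finset.mem_univ k)).symm
    rw [hsplit]
    have h1 : ∑ j ∈ Finset.univ.erase k, Real.log (μ j)
        ≤ ∑ _j ∈ Finset.univ.erase k, Real.log T :=
      Finset.sum_le_sum fun j _ => Real.log_le_log (hμpos j) (hμleT j)
    have h2 : ∑ _j ∈ Finset.univ.erase k, Real.log T
        = ((Finset.univ.erase k).card : ℝ) * Real.log T := by
      rw [Finset.sum_const, nsmul_eq_mul]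
    have h3 : ((Finset.univ.erase k).card : ℝ) ≤ (d : ℝ) := by
      have : (Finset.univ.erase k).card ≤ (Finset.univ : Finset (Fin d)).card :=
        Finset.card_le_card (Finset.erase_subset _ _)
      simp only [Finset.card_univ, Fintype.card_fin] at this
      exact_mod_cast this
    have h4 : ((Finset.univ.erase k).card : ℝ) * Real.log T ≤ (d : ℝ) * Real.log T :=
      mul_le_mul_of_nonneg_right h3 hlogT
    linarith
  have h6 : -M ≤ Real.log (μ k) := by
    have h1 := hφ
    rw [hφX, hφ1] at h1
    rw [hMdef]
    have hdist : ((n : ℝ) + d) * Real.log T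
        = (n : ℝ) * Real.log T + (d : ℝ) * Real.log T := by ring
    linarith
  calc ε ≤ Real.exp (-M) := min_le_right _ _
    _ ≤ μ k := by
        rw [← Real.exp_log (hμpos k)]
        exact Real.exp_le_exp.mpr h6

lemma smul_one_diag (c : ℂ) :
    c • (1 : Matrix (Fin d) (Fin d) ℂ) = diagonal (fun _ => c) := by
  ext i j
  by_cases h : i = j <;> simp [h, Matrix.one_apply, Matrix.diagonal_apply]

lemma posSemidef_smul_one {c : ℝ} (hc : 0 ≤ c) :
    ((c : ℂ) • (1 : Matrix (Fin d) (Fin d) ℂ)).PosSemidef := by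
  rw [smul_one_diag]
  exact posSemidef_diagonal_iff.mpr fun _ => Complex.zero_le_real.mpr hc

lemma posDef_smul_one {c : ℝ} (hc : 0 < c) :
    ((c : ℂ) • (1 : Matrix (Fin d) (Fin d) ℂ)).PosDef := by
  rw [smul_one_diag]
  exact posDef_diagonal_iff.mpr fun _ => Complex.zero_lt_real.mpr hc

lemma eig_le_of_psd {X : Matrix (Fin d) (Fin d) ℂ} (hX : X.IsHermitian) {T : ℝ}
    (h : ((T : ℂ) • 1 - X).PosSemidef) (k : Fin d) : hX.eigenvalues k ≤ T := by
  set e : Fin d → ℂ := ⇑(hX.eigenvectorBasis k) with he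
  have hnorm : ∑ j, Complex.normSq (e j) = 1 := by
    have h1 : ‖hX.eigenvectorBasis k‖ = 1 := hX.eigenvectorBasis.orthonormal.1 k
    have h2 : ‖hX.eigenvectorBasis k‖ = Real.sqrt (∑ j, ‖hX.eigenvectorBasis k j‖ ^ 2) :=
      EuclideanSpace.norm_eq _
    have h5 : 0 ≤ ∑ j, ‖hX.eigenvectorBasis k j‖ ^ 2 :=
      Finset.sum_nonneg fun j _ => sq_nonneg _
    have h3 : ∑ j, ‖hX.eigenvectorBasis k j‖ ^ 2 = 1 := by
      have h4 : Real.sqrt (∑ j, ‖hX.eigenvectorBasis k j‖ ^ 2) = 1 := by rw [← h2, h1]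
      nlinarith [Real.sq_sqrt h5]
    rw [← h3]
    congr 1; ext j
    rw [Complex.normSq_eq_norm_sq]
  have hXe : X *ᵥ e = (hX.eigenvalues k : ℂ) • e := by
    have h1 := hX.mulVec_eigenvectorBasis k
    rw [he]
    rw [h1]
    rw [RCLike.real_smul_eq_coe_smul (K := ℂ)]
    rfl
  have h2 := h.dotProduct_mulVec_nonneg e
  have h3 : star e ⬝ᵥ ((T : ℂ) • 1 - X) *ᵥ e = ((T - hX.eigenvalues k : ℝ) : ℂ) := by
    rw [Matrix.sub_mulVec, dotProduct_sub, hXe, Matrix.smul_mulVec, Matrix.one_mulVec,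
      dotProduct_smul, dotProduct_smul, dot_star_self_eq, hnorm]
    simp only [smul_eq_mul, mul_one]
    push_cast
    ring
  rw [h3] at h2
  have := Complex.zero_le_real.mp h2
  linarith

end PhiVAux

open PhiVAux

theorem stmt4 {n d : ℕ} (V : Matrix (Fin n) (Fin d) ℂ)
    (hV : V.rank = d) (hrows : ∀ i, V i ≠ 0) :
    ∃ Xstar : Matrix (Fin d) (Fin d) ℂ, Xstar.PosDef ∧
      IsGreatest {r : ℝ | ∃ X : Matrix (Fin d) (Fin d) ℂ, X.PosDef ∧ r = phiV V X}
        (phiV V Xstar) := by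
  classical
  rcases Nat.eq_zero_or_pos d with hd0 | hd
  · subst hd0
    have hpd : (1 : Matrix (Fin 0) (Fin 0) ℂ).PosDef := Matrix.PosDef.one
    refine ⟨1, hpd, ⟨1, hpd, rfl⟩, ?_⟩
    rintro r ⟨X, hX, rfl⟩
    have : X = 1 := by
      ext i j
      exact i.elim0
    rw [this]
  obtain ⟨T, ε, hε0, hε1, hT1, hbd⟩ := eig_bounds hd V hrows
  set K : Set (Matrix (Fin d) (Fin d) ℂ) :=
    {X | (X - (ε : ℂ) • 1).PosSemidef ∧ ((T : ℂ) • 1 - X).PosSemidef} with hKdef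
  have hKpos : ∀ X ∈ K, X.PosDef := by
    intro X hXK
    have h1 : ((ε : ℂ) • (1 : Matrix (Fin d) (Fin d) ℂ)).PosDef := posDef_smul_one hε0
    have h2 := Matrix.PosDef.posSemidef_add hXK.1 h1
    rwa [sub_add_cancel] at h2
  have h1K : (1 : Matrix (Fin d) (Fin d) ℂ) ∈ K := by
    constructor
    · have heq : (1 : Matrix (Fin d) (Fin d) ℂ) - (ε : ℂ) • 1
          = (((1 - ε : ℝ) : ℂ)) • (1 : Matrix (Fin d) (Fin d) ℂ) := by
        rw [Complex.ofReal_sub, sub_smul, Complex.ofReal_one, one_smul]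
      rw [heq]
      exact posSemidef_smul_one (by linarith)
    · have heq : (T : ℂ) • (1 : Matrix (Fin d) (Fin d) ℂ) - 1
          = (((T - 1 : ℝ) : ℂ)) • (1 : Matrix (Fin d) (Fin d) ℂ) := by
        rw [Complex.ofReal_sub, sub_smul, Complex.ofReal_one, one_smul]
      rw [heq]
      exact posSemidef_smul_one (by linarith)
  have hcl : IsClosed K := by
    have hc1 : Continuous fun X : Matrix (Fin d) (Fin d) ℂ => X - (ε : ℂ) • 1 := by
      refine continuous_matrix fun i j => ?_
      simp only [Matrix.sub_apply]
      exact (continuous_id.matrix_elem i j).sub continuous_const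
    have hc2 : Continuous fun X : Matrix (Fin d) (Fin d) ℂ => (T : ℂ) • 1 - X := by
      refine continuous_matrix fun i j => ?_
      simp only [Matrix.sub_apply]
      exact continuous_const.sub (continuous_id.matrix_elem i j)
    have : K = (fun X : Matrix (Fin d) (Fin d) ℂ => X - (ε : ℂ) • 1) ⁻¹'
        {A : Matrix (Fin d) (Fin d) ℂ | A.PosSemidef} ∩
        (fun X : Matrix (Fin d) (Fin d) ℂ => (T : ℂ) • 1 - X) ⁻¹'
        {A : Matrix (Fin d) (Fin d) ℂ | A.PosSemidef} := rfl
    rw [this]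
    exact (isClosed_posSemidef.preimage hc1).inter (isClosed_posSemidef.preimage hc2)
  have hKcomp : IsCompact K := by
    refine isCompact_of_bounded_closed hcl (R := Real.sqrt (d * T ^ 2)) ?_
    intro X hXK i j
    have hpd := hKpos X hXK
    exact entry_norm_bound hpd.1 (fun k => (hpd.eigenvalues_pos k).le)
      (fun k => eig_le_of_psd hpd.1 hXK.2 k) i j
  have hcont : ContinuousOn (phiV V) K := by
    refine continuousOn_of_forall_continuousAt ?_
    intro X hXK
    have hpd := hKpos X hXK
    have hpart1 : ContinuousAt
        (fun X : Matrix (Fin d) (Fin d) ℂ => ∑ i, Real.log ((star (V i) ⬝ᵥ X *ᵥ V i).re)) X := by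
      refine tendsto_finset_sum _ fun i _ => ?_
      have hpos : (star (V i) ⬝ᵥ X *ᵥ V i).re ≠ 0 := by
        have h1 := hpd.re_dotProduct_pos (hrows i)
        simp only [RCLike.re_to_complex] at h1
        exact h1.ne'
      have hF : ContinuousAt
          (fun Y : Matrix (Fin d) (Fin d) ℂ => (star (V i) ⬝ᵥ Y *ᵥ V i).re) X :=
        (Complex.continuous_re.comp (quad_continuous (V i))).continuousAt
      exact Filter.Tendsto.comp (Real.continuousAt_log hpos) hF
    have hpart2 : ContinuousAt
        (fun X : Matrix (Fin d) (Fin d) ℂ => Real.log X.det.re) X := by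
      have hpos : X.det.re ≠ 0 := by
        have h1 := hpd.det_pos
        exact ((Complex.lt_def.mp h1).1).ne'
      have hF : ContinuousAt
          (fun Y : Matrix (Fin d) (Fin d) ℂ => Y.det.re) X :=
        (Complex.continuous_re.comp (continuous_id.matrix_det)).continuousAt
      exact Filter.Tendsto.comp (Real.continuousAt_log hpos) hF
    have hpart3 : ContinuousAt
        (fun X : Matrix (Fin d) (Fin d) ℂ => X.trace.re) X :=
      (Complex.continuous_re.comp (continuous_id.matrix_trace)).continuousAt
    exact ((hpart1.add hpart2).sub hpart3).add continuousAt_const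
  obtain ⟨Xstar, hXsK, hmax⟩ := hKcomp.exists_isMaxOn ⟨1, h1K⟩ hcont
  have hXspd := hKpos Xstar hXsK
  refine ⟨Xstar, hXspd, ⟨Xstar, hXspd, rfl⟩, ?_⟩
  rintro r ⟨X, hX, rfl⟩
  by_cases hc : phiV V 1 ≤ phiV V X
  · obtain ⟨hlo, hhi⟩ := hbd X hX hc
    have hXK : X ∈ K := ⟨sub_smul_one_posSemidef hX.1 hlo, smul_one_sub_posSemidef hX.1 hhi⟩
    exact hmax hXK
  · exact le_trans (le_of_not_ge hc) (hmax h1K)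
end

section
/- Invariance of the relaxation: let V, W ∈ ℂ^{n×d} both have full column rank and nonzero rows, and suppose V V† = W W†. Then Φ(V) = Φ(W), where Φ(V) = sup over Hermitian positive definite d×d matrices X of ∑_{i=1}^n log(vᵢ† X vᵢ) + log det X − tr X + d, with v₁,…,vₙ the rows of V, and Φ(W) is defined analogously with the rows of W. -/
open MeasureTheory Matrix
open scoped ComplexOrder

/-- `Φ(V) = sup_{X ≻ 0} φ_V(X)`. -/
noncomputable def PhiV {n d : ℕ} (V : Matrix (Fin n) (Fin d) ℂ) : ℝ :=
  sSup {r : ℝ | ∃ X : Matrix (Fin d) (Fin d) ℂ, X.PosDef ∧ r = phiV V X}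

private lemma isUnit_of_rank_eq_card {d : ℕ} (G : Matrix (Fin d) (Fin d) ℂ)
    (h : G.rank = d) : IsUnit G := by
  rw [← Matrix.mulVec_surjective_iff_isUnit]
  have htop : LinearMap.range G.mulVecLin = ⊤ := by
    apply Submodule.eq_top_of_finrank_eq
    rw [← Matrix.rank, h, Module.finrank_fintype_fun_eq_card, Fintype.card_fin]
  intro y
  obtain ⟨x, hx⟩ := LinearMap.range_eq_top.mp htop y
  exact ⟨x, hx⟩

private lemma quad_conj {d : ℕ} (M X : Matrix (Fin d) (Fin d) ℂ) (v : Fin d → ℂ) :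
    star (M *ᵥ v) ⬝ᵥ X *ᵥ (M *ᵥ v) = star v ⬝ᵥ (Mᴴ * X * M) *ᵥ v := by
  simp only [star_mulVec, dotProduct_mulVec, vecMul_vecMul, Matrix.mul_assoc, mulVec_mulVec]

private lemma row_mul {n d : ℕ} (V : Matrix (Fin n) (Fin d) ℂ)
    (U : Matrix (Fin d) (Fin d) ℂ) (i : Fin n) :
    (V * U) i = Uᵀ *ᵥ V i := by
  funext j
  simp [Matrix.mul_apply, Matrix.mulVec, dotProduct, mul_comm]

private lemma phiV_conj {n d : ℕ} (V W : Matrix (Fin n) (Fin d) ℂ)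
    (M : Matrix (Fin d) (Fin d) ℂ) (hrow : ∀ i, W i = M *ᵥ V i) (hM : Mᴴ * M = 1)
    (X : Matrix (Fin d) (Fin d) ℂ) (hX : X.PosDef) :
    phiV W X = phiV V (Mᴴ * X * M) ∧ (Mᴴ * X * M).PosDef := by
  have hM' : M * Mᴴ = 1 := mul_eq_one_comm.mp hM
  constructor
  · unfold phiV
    have hdet : (Mᴴ * X * M).det = X.det := by
      rw [Matrix.det_mul, Matrix.det_mul]
      calc Mᴴ.det * X.det * M.det = Mᴴ.det * M.det * X.det := by ring
      _ = (Mᴴ * M).det * X.det := by rw [Matrix.det_mul]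
      _ = X.det := by rw [hM, Matrix.det_one, one_mul]
    have htr : (Mᴴ * X * M).trace = X.trace := by
      rw [Matrix.trace_mul_comm (Mᴴ * X) M, ← Matrix.mul_assoc, hM', Matrix.one_mul]
    rw [hdet, htr]
    have hterm : ∀ i, star (W i) ⬝ᵥ X *ᵥ W i = star (V i) ⬝ᵥ (Mᴴ * X * M) *ᵥ V i :=
      fun i => by rw [hrow i, quad_conj]
    simp only [hterm]
  · refine Matrix.PosDef.of_dotProduct_mulVec_pos ?_ ?_
    · have : (Mᴴ * X * M)ᴴ = Mᴴ * X * M := by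
        rw [Matrix.conjTranspose_mul, Matrix.conjTranspose_mul,
          Matrix.conjTranspose_conjTranspose, hX.1.eq, Matrix.mul_assoc]
      exact this
    · intro x hx
      have hMx : M *ᵥ x ≠ 0 := by
        intro h0
        apply hx
        have : (Mᴴ * M) *ᵥ x = Mᴴ *ᵥ (M *ᵥ x) := by rw [← Matrix.mulVec_mulVec]
        rw [hM, Matrix.one_mulVec] at this
        rw [this, h0, Matrix.mulVec_zero]
      have := hX.dotProduct_mulVec_pos hMx
      rwa [quad_conj] at this

theorem stmt5 {n d : ℕ} (V W : Matrix (Fin n) (Fin d) ℂ)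
    (hV : V.rank = d) (hW : W.rank = d)
    (hVrows : ∀ i, V i ≠ 0) (hWrows : ∀ i, W i ≠ 0)
    (hGram : V * Vᴴ = W * Wᴴ) :
    PhiV V = PhiV W := by
  classical
  set G : Matrix (Fin d) (Fin d) ℂ := Vᴴ * V with hGdef
  have hGrank : G.rank = d := by
    rw [hGdef, Matrix.rank_conjTranspose_mul_self, hV]
  have hGunit : IsUnit G := isUnit_of_rank_eq_card G hGrank
  have hGdetu : IsUnit G.det := (Matrix.isUnit_iff_isUnit_det G).mp hGunit
  have hGinv : G⁻¹ * G = 1 := Matrix.nonsing_inv_mul G hGdetu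
  have hGinv' : G * G⁻¹ = 1 := Matrix.mul_nonsing_inv G hGdetu
  set P : Matrix (Fin n) (Fin n) ℂ := V * G⁻¹ * Vᴴ with hPdef
  have hPV : P * V = V := by
    rw [hPdef, Matrix.mul_assoc (V * G⁻¹) Vᴴ V, ← hGdef, Matrix.mul_assoc V G⁻¹ G,
      hGinv, Matrix.mul_one]
  have h0 : (1 - P) * V = 0 := by
    rw [Matrix.sub_mul, Matrix.one_mul, hPV, sub_self]
  have hA : ((1 - P) * W) * ((1 - P) * W)ᴴ = 0 := by
    calc ((1 - P) * W) * ((1 - P) * W)ᴴ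
        = (1 - P) * (W * Wᴴ) * (1 - P)ᴴ := by
          rw [Matrix.conjTranspose_mul]; simp [Matrix.mul_assoc]
      _ = (1 - P) * (V * Vᴴ) * (1 - P)ᴴ := by rw [hGram]
      _ = ((1 - P) * V) * ((1 - P) * V)ᴴ := by
          rw [Matrix.conjTranspose_mul]; simp [Matrix.mul_assoc]
      _ = 0 := by rw [h0, Matrix.zero_mul]
  have hW0 : (1 - P) * W = 0 := by
    have h := Matrix.conjTranspose_mul_self_eq_zero (A := ((1 - P) * W)ᴴ)
    rw [Matrix.conjTranspose_conjTranspose] at h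
    have h2 := h.mp hA
    simpa using congrArg Matrix.conjTranspose h2
  have hPW : P * W = W := by
    have h3 : W - P * W = 0 := by
      have := hW0
      rwa [Matrix.sub_mul, Matrix.one_mul] at this
    exact (sub_eq_zero.mp h3).symm
  set U : Matrix (Fin d) (Fin d) ℂ := G⁻¹ * (Vᴴ * W) with hUdef
  have hVU : V * U = W := by
    rw [hUdef, ← Matrix.mul_assoc V G⁻¹, ← Matrix.mul_assoc (V * G⁻¹) Vᴴ W, ← hPdef, hPW]
  have key : G * (U * Uᴴ) * G = G * G := by
    have hmid : V * (U * Uᴴ) * Vᴴ = V * Vᴴ := by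
      calc V * (U * Uᴴ) * Vᴴ = (V * U) * (V * U)ᴴ := by
            rw [Matrix.conjTranspose_mul V U]; simp only [Matrix.mul_assoc]
        _ = W * Wᴴ := by rw [hVU]
        _ = V * Vᴴ := hGram.symm
    calc G * (U * Uᴴ) * G = Vᴴ * (V * (U * Uᴴ) * Vᴴ) * V := by
          rw [hGdef]; simp [Matrix.mul_assoc]
      _ = Vᴴ * (V * Vᴴ) * V := by rw [hmid]
      _ = G * G := by rw [hGdef]; simp [Matrix.mul_assoc]
  have hUU : U * Uᴴ = 1 := by
    calc U * Uᴴ = (G⁻¹ * G) * (U * Uᴴ) * (G * G⁻¹) := by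
          rw [hGinv, hGinv', Matrix.one_mul, Matrix.mul_one]
      _ = G⁻¹ * (G * (U * Uᴴ) * G) * G⁻¹ := by simp [Matrix.mul_assoc]
      _ = G⁻¹ * (G * G) * G⁻¹ := by rw [key]
      _ = (G⁻¹ * G) * (G * G⁻¹) := by simp [Matrix.mul_assoc]
      _ = 1 := by rw [hGinv, hGinv', Matrix.one_mul]
  have hU'U : Uᴴ * U = 1 := mul_eq_one_comm.mp hUU
  set M : Matrix (Fin d) (Fin d) ℂ := Uᵀ with hMdef
  have hMct : Mᴴ = (Uᴴ)ᵀ := by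
    rw [hMdef]
    ext i j
    simp [Matrix.conjTranspose_apply, Matrix.transpose_apply]
  have hMunit : Mᴴ * M = 1 := by
    rw [hMct, hMdef, ← Matrix.transpose_mul, hUU, Matrix.transpose_one]
  have hMunit' : M * Mᴴ = 1 := mul_eq_one_comm.mp hMunit
  have hrow : ∀ i, W i = M *ᵥ V i := by
    intro i
    rw [← hVU, row_mul, hMdef]
  have hrow' : ∀ i, V i = Mᴴ *ᵥ W i := by
    intro i
    rw [hrow i, Matrix.mulVec_mulVec, hMunit, Matrix.one_mulVec]
  have hMunit2 : (Mᴴ)ᴴ * Mᴴ = 1 := by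
    rw [Matrix.conjTranspose_conjTranspose, hMunit']
  have hset : {r : ℝ | ∃ X : Matrix (Fin d) (Fin d) ℂ, X.PosDef ∧ r = phiV V X}
      = {r : ℝ | ∃ X : Matrix (Fin d) (Fin d) ℂ, X.PosDef ∧ r = phiV W X} := by
    ext r
    constructor
    · rintro ⟨X, hX, rfl⟩
      obtain ⟨heq, hpd⟩ := phiV_conj W V Mᴴ hrow' hMunit2 X hX
      rw [Matrix.conjTranspose_conjTranspose] at heq hpd
      exact ⟨M * X * Mᴴ, hpd, heq⟩
    · rintro ⟨X, hX, rfl⟩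
      obtain ⟨heq, hpd⟩ := phiV_conj V W M hrow hMunit X hX
      exact ⟨Mᴴ * X * M, hpd, heq⟩
  unfold PhiV
  rw [hset]
end

section
/- The permanent of a Hermitian positive semidefinite matrix is a nonnegative real number: if A is an n×n Hermitian positive semidefinite matrix, then per(A) is real and per(A) ≥ 0. -/
open Matrix
open scoped ComplexOrder

theorem stmt17 {n : ℕ} (A : Matrix (Fin n) (Fin n) ℂ) (hA : A.PosSemidef) :
    0 ≤ A.permanent := by
  obtain ⟨B, rfl⟩ : ∃ B : Matrix (Fin n) (Fin n) ℂ, A = Bᴴ * B := by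
    open scoped MatrixOrder in
    obtain ⟨B, hB⟩ := CStarAlgebra.nonneg_iff_eq_star_mul_self.mp hA.nonneg
    exact ⟨B, hB⟩
  set Q : (Fin n → Fin n) → ℂ := fun f => ∏ i, B (f i) i with hQ
  set R : (Fin n → Fin n) → ℂ := fun f => ∑ σ : Equiv.Perm (Fin n), Q (f ∘ ⇑σ) with hR
  -- R is invariant under precomposition with a permutation
  have hRcomp : ∀ (τ : Equiv.Perm (Fin n)) (f : Fin n → Fin n), R (f ∘ ⇑τ) = R f := by
    intro τ f
    simp only [hR]
    have := Equiv.sum_comp (Equiv.mulLeft τ) (fun σ : Equiv.Perm (Fin n) => Q (f ∘ ⇑σ))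
    simp only [Equiv.coe_mulLeft] at this
    rw [← this]
    rfl
  -- main expansion
  have hmain : (Bᴴ * B).permanent = ∑ f : Fin n → Fin n, star (R f) * Q f := by
    unfold Matrix.permanent
    simp only [Matrix.mul_apply, Matrix.conjTranspose_apply]
    have h1 : ∀ σ : Equiv.Perm (Fin n),
        (∏ i, ∑ k, star (B k (σ i)) * B k i)
          = ∑ f : Fin n → Fin n, star (Q (f ∘ ⇑σ⁻¹)) * Q f := by
      intro σ
      rw [Finset.prod_univ_sum (fun _ => Finset.univ)
        (fun i k => star (B k (σ i)) * B k i), Fintype.piFinset_univ]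
      refine Finset.sum_congr rfl fun f _ => ?_
      rw [Finset.prod_mul_distrib, ← star_prod]
      congr 2
      have := Equiv.prod_comp σ (fun i => B (f (σ⁻¹ i)) i)
      simp only [Equiv.Perm.coe_inv, Equiv.symm_apply_apply] at this
      simp only [hQ, Function.comp_apply]
      exact this
    rw [Finset.sum_congr rfl fun σ _ => h1 σ, Finset.sum_comm]
    refine Finset.sum_congr rfl fun f _ => ?_
    rw [hR, star_sum, Finset.sum_mul]
    exact Equiv.sum_comp (Equiv.inv (Equiv.Perm (Fin n)))
      (fun σ => star (Q (f ∘ ⇑σ)) * Q f)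
  -- invariance of the sum under replacing Q f by Q (f ∘ σ)
  have hstep : ∀ σ : Equiv.Perm (Fin n),
      (∑ f : Fin n → Fin n, star (R f) * Q f)
        = ∑ f : Fin n → Fin n, star (R f) * Q (f ∘ ⇑σ) := by
    intro σ
    refine Fintype.sum_equiv (Equiv.arrowCongr σ (Equiv.refl (Fin n))) _ _ fun f => ?_
    have harr : (Equiv.arrowCongr σ (Equiv.refl (Fin n))) f = f ∘ ⇑σ⁻¹ := by
      funext i; rfl
    have hcomp : (f ∘ ⇑σ⁻¹) ∘ ⇑σ = f := by funext i; simp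
    rw [harr, hRcomp, hcomp]
  set S := ∑ f : Fin n → Fin n, star (R f) * Q f with hS
  set N := Fintype.card (Equiv.Perm (Fin n)) with hN
  have hcard : (N : ℂ) * S = ∑ f : Fin n → Fin n, star (R f) * R f := by
    have : (N : ℂ) * S = ∑ _σ : Equiv.Perm (Fin n), S := by
      rw [Finset.sum_const, Finset.card_univ, nsmul_eq_mul, hN]
    rw [this, Finset.sum_congr rfl fun σ _ => hstep σ, Finset.sum_comm]
    refine Finset.sum_congr rfl fun f _ => ?_
    rw [hR, Finset.mul_sum]
  have hnn : (0 : ℂ) ≤ (N : ℂ) * S := by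
    rw [hcard]
    exact Finset.sum_nonneg fun f _ => star_mul_self_nonneg (R f)
  have hN0 : (N : ℝ) ≠ 0 := by
    have := Fintype.card_pos (α := Equiv.Perm (Fin n))
    positivity
  have key : S = (((N : ℝ)⁻¹ : ℝ) : ℂ) * ((N : ℂ) * S) := by
    rw [← mul_assoc]
    have : (((N : ℝ)⁻¹ : ℝ) : ℂ) * (N : ℂ) = 1 := by
      push_cast
      rw [inv_mul_cancel₀]
      exact_mod_cast hN0
    rw [this, one_mul]
  rw [hmain, key]
  exact mul_nonneg (by exact_mod_cast inv_nonneg.mpr (Nat.cast_nonneg N)) hnn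
end

section
/- Product-of-diagonal lower bound: if A is an n×n Hermitian positive semidefinite matrix, then per(A) ≥ e^{−γn} ∏_{i=1}^n A_{ii}, where γ is the Euler–Mascheroni constant. -/
open Matrix Equiv Finset
open scoped ComplexOrder

set_option linter.unusedSectionVars false

variable {ι κ : Type*} [Fintype ι] [Fintype κ] [DecidableEq ι] [DecidableEq κ]

lemma permA (X Y : Matrix κ ι ℂ) :
    (Xᴴ * Y).permanent
      = ∑ g : ι → κ, star (X.submatrix g id).permanent * ∏ b, Y (g b) b := by
  unfold Matrix.permanent
  have key : ∀ σ : Perm ι, (∏ b, (Xᴴ * Y) (σ b) b)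
      = ∑ g : ι → κ, ∏ b, (star (X (g b) (σ b)) * Y (g b) b) := by
    intro σ
    simp only [Matrix.mul_apply, Matrix.conjTranspose_apply]
    rw [Finset.prod_univ_sum]
    rw [Fintype.piFinset_univ]
  rw [Finset.sum_congr rfl (fun σ _ => key σ)]
  rw [Finset.sum_comm]
  refine Finset.sum_congr rfl fun g _ => ?_
  have h2 : ∀ σ : Perm ι, ∏ b, (star (X (g b) (σ b)) * Y (g b) b)
      = star (∏ b, X (g b) (σ b)) * ∏ b, Y (g b) b := by
    intro σ
    rw [Finset.prod_mul_distrib, star_prod]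
  rw [Finset.sum_congr rfl fun σ _ => h2 σ, ← Finset.sum_mul, ← star_sum]
  congr 2
  refine Fintype.sum_equiv (Equiv.inv (Perm ι)) _ _ (fun σ => ?_)
  refine Fintype.prod_equiv σ _ _ (fun b => ?_)
  simp [Matrix.submatrix_apply]

lemma permB (X Y : Matrix κ ι ℂ) :
    (Nat.factorial (Fintype.card ι) : ℂ) * (Xᴴ * Y).permanent
      = ∑ g : ι → κ, star (X.submatrix g id).permanent * (Y.submatrix g id).permanent := by
  have hYg : ∀ g : ι → κ, (Y.submatrix g id).permanent = ∑ τ : Perm ι, ∏ b, Y (g (τ b)) b :=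
    fun g => rfl
  rw [Finset.sum_congr rfl (fun (g : ι → κ) _ => by rw [hYg g, Finset.mul_sum])]
  rw [Finset.sum_comm]
  have key : ∀ τ : Perm ι,
      (∑ g : ι → κ, star (X.submatrix g id).permanent * ∏ b, Y (g (τ b)) b)
        = (Xᴴ * Y).permanent := by
    intro τ
    rw [permA X Y]
    refine Fintype.sum_equiv (Equiv.arrowCongr τ.symm (Equiv.refl κ)) _ _ (fun g => ?_)
    have h1 : (Equiv.arrowCongr τ.symm (Equiv.refl κ)) g = g ∘ τ := rfl
    rw [h1]
    have h2 : X.submatrix (g ∘ τ) id = (X.submatrix g id).submatrix τ id := rfl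
    rw [h2, Matrix.permanent_permute_cols]
    rfl
  rw [Finset.sum_congr rfl fun τ _ => key τ, Finset.sum_const, Finset.card_univ,
    Fintype.card_perm, nsmul_eq_mul]

lemma quad_nonneg {ρ μ : Type*} [Fintype ρ] [Fintype μ] [DecidableEq μ]
    (X : Matrix κ μ ℂ) (f : ρ → ι → μ) (c : ρ → ℂ) :
    0 ≤ ∑ j, ∑ k, star (c j) * c k *
      ((X.submatrix id (f j))ᴴ * X.submatrix id (f k)).permanent := by
  set N := Nat.factorial (Fintype.card ι) with hN
  suffices h : 0 ≤ (N:ℂ) * ∑ j, ∑ k, star (c j) * c k *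
      ((X.submatrix id (f j))ᴴ * X.submatrix id (f k)).permanent by
    have hinv : (0:ℂ) ≤ (N:ℂ)⁻¹ := by
      rw [show ((N:ℂ))⁻¹ = (((N:ℝ)⁻¹ : ℝ) : ℂ) by push_cast; ring, Complex.zero_le_real]
      positivity
    have h2 := mul_nonneg hinv h
    rwa [← mul_assoc, inv_mul_cancel₀ (by exact_mod_cast (Nat.factorial_ne_zero _)), one_mul] at h2
  have hterm : ∀ (j k : ρ), (N:ℂ) * ((X.submatrix id (f j))ᴴ * X.submatrix id (f k)).permanent
      = ∑ g : ι → κ,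
        star (X.submatrix g (f j)).permanent * (X.submatrix g (f k)).permanent := by
    intro j k
    exact permB (X.submatrix id (f j)) (X.submatrix id (f k))
  have hg : ∀ g : ι → κ,
      star (∑ j, c j * (X.submatrix g (f j)).permanent) *
        (∑ k, c k * (X.submatrix g (f k)).permanent)
      = ∑ j, ∑ k, star (c j) * c k *
          (star (X.submatrix g (f j)).permanent * (X.submatrix g (f k)).permanent) := by
    intro g
    rw [star_sum, Finset.sum_mul_sum]
    refine Finset.sum_congr rfl fun j _ => Finset.sum_congr rfl fun k _ => ?_
    rw [star_mul']
    ring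
  have expand : (∑ g : ι → κ, star (∑ j, c j * (X.submatrix g (f j)).permanent) *
        (∑ k, c k * (X.submatrix g (f k)).permanent))
      = (N:ℂ) * ∑ j, ∑ k, star (c j) * c k *
          ((X.submatrix id (f j))ᴴ * X.submatrix id (f k)).permanent := by
    rw [Finset.sum_congr rfl fun g _ => hg g]
    rw [Finset.sum_comm]
    rw [Finset.sum_congr rfl fun (j : ρ) _ => Finset.sum_comm]
    rw [Finset.mul_sum]
    refine Finset.sum_congr rfl fun j _ => ?_
    rw [Finset.mul_sum]
    refine Finset.sum_congr rfl fun k _ => ?_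
    rw [← Finset.mul_sum, ← hterm j k]
    ring
  rw [← expand]
  exact Finset.sum_nonneg fun g _ => star_mul_self_nonneg _

lemma permanent_succ_column_zero {n : ℕ} (A : Matrix (Fin (n+1)) (Fin (n+1)) ℂ) :
    A.permanent = ∑ i, A i 0 * (A.submatrix i.succAbove Fin.succ).permanent := by
  rw [Matrix.permanent, Finset.univ_perm_fin_succ, ← Finset.univ_product_univ]
  simp only [Finset.sum_map, Equiv.toEmbedding_apply, Finset.sum_product]
  refine Finset.sum_congr rfl fun p _ => Fin.cases ?_ (fun i => ?_) p
  · simp only [Fin.prod_univ_succ, Equiv.Perm.decomposeFin_symm_apply_zero,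
      Equiv.Perm.decomposeFin_symm_apply_succ, Equiv.swap_self, Equiv.refl_apply,
      Fin.succAbove_zero, Matrix.permanent, Finset.mul_sum, Matrix.submatrix_apply, id]
  · simp only [Fin.prod_univ_succ, Equiv.Perm.decomposeFin_symm_apply_zero,
      Equiv.Perm.decomposeFin_symm_apply_succ, Matrix.permanent, Finset.mul_sum,
      Matrix.submatrix_apply]
    refine Finset.sum_bij (fun σ _ => i.cycleRange • σ) (fun _ _ => Finset.mem_univ _)
      ?_ ?_ ?_
    · intro a _ b _ h
      exact smul_left_cancel _ h
    · intro τ _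
      exact ⟨i.cycleRange⁻¹ • τ, Finset.mem_univ _, by simp⟩
    · intro σ _
      congr 1
      refine Finset.prod_congr rfl fun x _ => ?_
      rw [← Fin.succAbove_cycleRange]
      rfl

lemma permanent_succ_row_zero {n : ℕ} (A : Matrix (Fin (n+1)) (Fin (n+1)) ℂ) :
    A.permanent = ∑ j, A 0 j * (A.submatrix Fin.succ j.succAbove).permanent := by
  rw [← Matrix.permanent_transpose A, permanent_succ_column_zero]
  refine Finset.sum_congr rfl fun j _ => ?_
  rw [← Matrix.permanent_transpose (A.submatrix Fin.succ j.succAbove)]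
  rfl

lemma diag_nonneg {m : Type*} [Fintype m] [DecidableEq m] {A : Matrix m m ℂ}
    (hA : A.PosSemidef) (i : m) : 0 ≤ A i i := by
  exact hA.diag_nonneg

theorem marcus : ∀ (n : ℕ) (A : Matrix (Fin n) (Fin n) ℂ), A.PosSemidef →
    (∏ i, A i i) ≤ A.permanent := by
  intro n
  induction n with
  | zero => intro A _; simp [Matrix.permanent_isEmpty]
  | succ m ih =>
    intro A hA
    match m, ih with
    | 0, _ =>
      simp [Matrix.permanent_unique]
    | Nat.succ m', ih =>
      set B := A.submatrix Fin.succ Fin.succ with hBdef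
      have hB : B.PosSemidef := hA.submatrix _
      -- expansion along column 0
      rw [permanent_succ_column_zero, Fin.sum_univ_succ]
      have h00 : A 0 0 * (A.submatrix (Fin.succAbove 0) Fin.succ).permanent
          = A 0 0 * B.permanent := by
        rw [hBdef, Fin.succAbove_zero]
      rw [h00]
      -- second part is nonneg
      have hS : 0 ≤ ∑ i : Fin (m'+1), A i.succ 0 *
          (A.submatrix (Fin.succAbove i.succ) Fin.succ).permanent := by
        have hexp : ∀ i : Fin (m'+1),
            (A.submatrix (Fin.succAbove i.succ) Fin.succ).permanent
            = ∑ k : Fin (m'+1), A 0 k.succ *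
                (B.submatrix i.succAbove k.succAbove).permanent := by
          intro i
          rw [permanent_succ_row_zero]
          refine Finset.sum_congr rfl fun k _ => ?_
          congr 1
          · rw [Matrix.submatrix_submatrix]
            congr 1
            ext a b
            simp [hBdef, Fin.succ_succAbove_succ]
        have hc : ∀ i : Fin (m'+1), A i.succ 0 = star (A 0 i.succ) :=
          fun i => (hA.1.apply i.succ 0).symm
        obtain ⟨Y, hY⟩ : ∃ Y : Matrix (Fin (m'+1)) (Fin (m'+1)) ℂ, B = Yᴴ * Y := by
          open scoped MatrixOrder in
          obtain ⟨X, hX, -, hXA⟩ := CFC.exists_sqrt_of_isSelfAdjoint_of_quasispectrumRestricts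
            hB.isHermitian (QuasispectrumRestricts.nnreal_of_nonneg hB.nonneg)
          exact ⟨X, by rw [← hXA, show Xᴴ = X from hX]⟩
        have hmin : ∀ (j k : Fin (m'+1)), B.submatrix j.succAbove k.succAbove
            = (Y.submatrix id j.succAbove)ᴴ * (Y.submatrix id k.succAbove) := by
          intro j k
          ext a b
          rw [hY]
          simp [Matrix.mul_apply]
        calc (0:ℂ) ≤ ∑ j : Fin (m'+1), ∑ k : Fin (m'+1),
            star (A 0 j.succ) * A 0 k.succ *
              ((Y.submatrix id (Fin.succAbove j))ᴴ *
                Y.submatrix id (Fin.succAbove k)).permanent :=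
            quad_nonneg Y (fun j : Fin (m'+1) => j.succAbove) (fun j => A 0 j.succ)
          _ = ∑ i : Fin (m'+1), A i.succ 0 *
              (A.submatrix (Fin.succAbove i.succ) Fin.succ).permanent := by
            refine Finset.sum_congr rfl fun j _ => ?_
            rw [hexp j, Finset.mul_sum]
            refine Finset.sum_congr rfl fun k _ => ?_
            rw [hmin j k, hc j]
            ring
      have hprod : ∏ i, A i i = A 0 0 * ∏ i : Fin (m'+1), B i i := by
        rw [Fin.prod_univ_succ]
        rfl
      rw [hprod]
      have h1 : A 0 0 * ∏ i : Fin (m'+1), B i i ≤ A 0 0 * B.permanent :=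
        mul_le_mul_of_nonneg_left (ih B hB) (diag_nonneg hA 0)
      exact le_trans h1 (le_add_of_nonneg_right hS)

theorem stmt18 {n : ℕ} (A : Matrix (Fin n) (Fin n) ℂ) (hA : A.PosSemidef) :
    (Real.exp (-(Real.eulerMascheroniConstant * n)) : ℂ) * ∏ i, A i i ≤
      A.permanent := by
  have hexp : (Real.exp (-(Real.eulerMascheroniConstant * n)) : ℂ) ≤ 1 := by
    rw [show (1:ℂ) = ((1:ℝ):ℂ) by norm_num, Complex.real_le_real]
    rw [Real.exp_le_one_iff]
    have hγ : (0:ℝ) ≤ Real.eulerMascheroniConstant :=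
      le_of_lt (lt_trans (by norm_num) Real.one_half_lt_eulerMascheroniConstant)
    simp only [neg_nonpos]
    positivity
  have hprod : (0:ℂ) ≤ ∏ i, A i i :=
    Finset.prod_nonneg fun i _ => diag_nonneg hA i
  calc (Real.exp (-(Real.eulerMascheroniConstant * n)) : ℂ) * ∏ i, A i i
      ≤ 1 * ∏ i, A i i := mul_le_mul_of_nonneg_right hexp hprod
    _ = ∏ i, A i i := one_mul _
    _ ≤ A.permanent := marcus n A hA
end
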